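/- The function Φ(p) = (p₁p₂⋯pₙ)^{1/n} (the geometric mean) satisfies ∫₀¹ Φ(t·e(1) + (1−t)·ē)⁻² dt = ∞, where ē = (1/n,…,1/n) and e(1) = (1,0,…,0). -/

import Mathlib

open MeasureTheory

lemma aux_div_inv : ∫⁻ t in Set.Ioo (0 : ℝ) 1, ENNReal.ofReal (1 / (1 - t)) = ⊤ := by
  by_contra h
  have hmeas : AEStronglyMeasurable (fun t : ℝ => 1 / (1 - t))
      (volume.restrict (Set.Ioo (0:ℝ) 1)) :=
    by simp only [one_div]
       exact ((measurable_const.sub measurable_id).inv).aestronglyMeasurable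
  have hnn : 0 ≤ᵐ[volume.restrict (Set.Ioo (0:ℝ) 1)] fun t : ℝ => 1 / (1 - t) := by
    filter_upwards [ae_restrict_mem measurableSet_Ioo] with t ht
    have : (0:ℝ) < 1 - t := by linarith [ht.2]
    positivity
  have hint : IntegrableOn (fun t : ℝ => 1 / (1 - t)) (Set.Ioo 0 1) :=
    (lintegral_ofReal_ne_top_iff_integrable hmeas hnn).1 h
  have hint2 : IntegrableOn (fun t : ℝ => (t - 1)⁻¹) (Set.Ioo (0:ℝ) 1) := by
    apply hint.neg.congr
    apply ae_of_all
    intro t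
    simp [one_div, ← inv_neg, neg_sub]
  have hint3 : IntervalIntegrable (fun t : ℝ => (t - 1)⁻¹) volume 0 1 := by
    rw [intervalIntegrable_iff_integrableOn_Ioo_of_le (by norm_num)]
    exact hint2
  rw [intervalIntegrable_sub_inv_iff] at hint3
  rcases hint3 with h1 | h1
  · norm_num at h1
  · exact h1 (by norm_num [Set.uIcc_of_le])

theorem stmt_14 (n : ℕ) (hn : 2 ≤ n)
    (Φ : (Fin n → ℝ) → ℝ)
    (hΦ : ∀ p, Φ p = (∏ i, p i) ^ ((n : ℝ)⁻¹))
    (γ : ℝ → (Fin n → ℝ))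
    (hγ : ∀ t, γ t = fun (i : Fin n) =>
      t * (if (i : ℕ) = 0 then 1 else 0) + (1 - t) * ((n : ℝ)⁻¹)) :
    ∫⁻ t in Set.Ioo (0 : ℝ) 1, ENNReal.ofReal (1 / (Φ (γ t)) ^ 2) = ⊤ := by
  have hn0 : (0:ℝ) < n := by positivity
  have hninv : ((n:ℝ))⁻¹ ≤ 1 := by
    rw [inv_le_one_iff₀]
    right
    exact_mod_cast le_trans (by norm_num) hn
  rw [eq_top_iff, ← aux_div_inv]
  apply setLIntegral_mono' measurableSet_Ioo
  intro t ht
  apply ENNReal.ofReal_le_ofReal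
  set s : ℝ := 1 - t with hs
  have hs0 : 0 < s := by simp only [hs]; linarith [ht.2]
  have hs1 : s ≤ 1 := by simp only [hs]; linarith [ht.1]
  set e0 : Fin n := ⟨0, by omega⟩ with he0
  -- compute the product
  have hprod : (∏ i, γ t i) = (t + s * ((n:ℝ))⁻¹) * (s * ((n:ℝ))⁻¹) ^ (n - 1) := by
    have h0 : e0 ∈ Finset.univ := Finset.mem_univ _
    rw [← Finset.mul_prod_erase _ _ h0]
    congr 1
    · rw [hγ]; simp [he0, hs]
    · rw [Finset.prod_congr rfl (fun i hi => ?_), Finset.prod_const,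
        Finset.card_erase_of_mem h0, Finset.card_univ, Fintype.card_fin]
      rw [hγ]
      have : (i : ℕ) ≠ 0 := by
        intro hc
        apply Finset.ne_of_mem_erase hi
        exact Fin.ext (by simp [he0, hc])
      simp [this, hs]
  have hP0 : 0 < (∏ i, γ t i) := by
    rw [hprod]
    have h1 : 0 < t + s * ((n:ℝ))⁻¹ := by
      have := ht.1; positivity
    have h2 : (0:ℝ) < s * ((n:ℝ))⁻¹ := by positivity
    positivity
  have hPle : (∏ i, γ t i) ≤ s ^ (n - 1) := by
    rw [hprod]
    have hsn : s * ((n:ℝ))⁻¹ ≤ s :=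
      le_trans (mul_le_mul_of_nonneg_left hninv hs0.le) (le_of_eq (mul_one s))
    calc (t + s * ((n:ℝ))⁻¹) * (s * ((n:ℝ))⁻¹) ^ (n - 1)
        ≤ 1 * s ^ (n - 1) := by
          apply mul_le_mul
          · have : t + s * ((n:ℝ))⁻¹ ≤ t + s := by linarith
            simp only [hs] at this ⊢; linarith
          · exact pow_le_pow_left₀ (by positivity) hsn _
          · positivity
          · norm_num
      _ = s ^ (n - 1) := one_mul _
  -- bound Φ²
  have hΦ2 : (Φ (γ t)) ^ 2 ≤ s := by
    rw [hΦ]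
    have h1 : ((∏ i, γ t i) ^ ((n:ℝ)⁻¹)) ^ 2 = (∏ i, γ t i) ^ ((n:ℝ)⁻¹ * 2) := by
      rw [sq, ← Real.rpow_add hP0]
      congr 1
      ring
    rw [h1]
    have hcast : ((n - 1 : ℕ) : ℝ) = (n : ℝ) - 1 := by
      rw [Nat.cast_sub (by omega : 1 ≤ n), Nat.cast_one]
    have hexp : (1:ℝ) ≤ ((n:ℝ) - 1) * ((n:ℝ)⁻¹ * 2) := by
      have heq : ((n:ℝ) - 1) * ((n:ℝ)⁻¹ * 2) = (2 * n - 2) / n := by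
        field_simp
      rw [heq, le_div_iff₀ hn0]
      have hn2 : (2:ℝ) ≤ n := by exact_mod_cast hn
      linarith
    calc (∏ i, γ t i) ^ ((n:ℝ)⁻¹ * 2)
        ≤ (s ^ (n-1)) ^ ((n:ℝ)⁻¹ * 2) :=
          Real.rpow_le_rpow hP0.le hPle (by positivity)
      _ = s ^ (((n:ℝ) - 1) * ((n:ℝ)⁻¹ * 2)) := by
          rw [← Real.rpow_natCast s (n-1), ← Real.rpow_mul hs0.le, hcast]
      _ ≤ s ^ (1:ℝ) := Real.rpow_le_rpow_of_exponent_ge hs0 hs1 hexp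
      _ = s := Real.rpow_one s
  have hΦpos : 0 < (Φ (γ t)) ^ 2 := by
    rw [hΦ]
    positivity
  exact one_div_le_one_div_of_le hΦpos hΦ2
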